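/- Let $K : (0,\infty) \to [0,\infty)$ be a nondecreasing, concave, differentiable function with $A := \lim_{t\to\infty}K(t) < \infty$ and $M := \sup_{t>0}(\frac{K(t)}{t} - K'(t)) < \infty$. Then for $\theta \in [0,1)$ and $1 \leq q < \infty$ there is an absolute constant $c$ (independent of $\theta$, $q$, $K$) such that $\left(\int_0^\infty (t^{1-\theta}K'(t))^q\frac{dt}{t}\right)^{1/q} \leq c\, q\, (1 + [(1-\theta)q]^{1/q})^{1-\theta}\,[(1-\theta)q]^{-\theta - 1/q}\, A^{1-\theta} M^{\theta} \cdot [(1-\theta)q]^{1/q - 1/q}$; in particular when $(1-\theta)q = 1$ one has $\left(\int_0^\infty (t^{1-\theta}K'(t))^q \frac{dt}{t}\right)^{1/q} \leq c\, q\, A^{1-\theta} M^{\theta}$. -/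

import Mathlib

open Set MeasureTheory Filter Topology

namespace JN16

variable {K : ℝ → ℝ} {A M : ℝ}


lemma inv_e_le_log_two : (Real.exp 1)⁻¹ ≤ Real.log 2 := by
  have h1 := Real.exp_one_gt_d9
  have h2 := Real.log_two_gt_d9
  have h3 : (Real.exp 1)⁻¹ ≤ (2.7182818283 : ℝ)⁻¹ := by
    apply inv_anti₀ (by norm_num) h1.le
  have h4 : ((2.7182818283 : ℝ))⁻¹ ≤ 0.6931471803 := by norm_num
  linarith

lemma log_le_div_e {x : ℝ} (hx : 0 < x) : Real.log x ≤ x * (Real.exp 1)⁻¹ := by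
  have h := Real.log_le_sub_one_of_pos (show 0 < x * (Real.exp 1)⁻¹ by positivity)
  rw [Real.log_mul hx.ne' (by positivity), Real.log_inv, Real.log_exp] at h
  linarith

lemma rpow_self_ge_half {x : ℝ} (hx : 0 < x) (hx1 : x ≤ 1) : (1:ℝ)/2 ≤ x ^ x := by
  have hlog : -(Real.exp 1)⁻¹ ≤ Real.log x * x := by
    have h := log_le_div_e (inv_pos.2 hx)
    rw [Real.log_inv] at h
    have h2 := mul_le_mul_of_nonneg_right h hx.le
    have h3 : x⁻¹ * (Real.exp 1)⁻¹ * x = (Real.exp 1)⁻¹ := by field_simp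
    rw [h3] at h2
    linarith
  have hle : -Real.log 2 ≤ Real.log x * x := le_trans (by linarith [inv_e_le_log_two]) hlog
  rw [Real.rpow_def_of_pos hx]
  calc (1:ℝ)/2 = Real.exp (-(Real.log 2)) := by
        rw [Real.exp_neg, Real.exp_log two_pos]; norm_num
    _ ≤ Real.exp (Real.log x * x) := Real.exp_le_exp.2 hle

/-- `q^(-1/q) ≥ 1/2` for `q ≥ 1`. -/
lemma rpow_neg_inv_ge_half {q : ℝ} (hq : 1 ≤ q) : (1:ℝ)/2 ≤ q ^ (-(1/q)) := by
  have hq0 : (0:ℝ) < q := lt_of_lt_of_le one_pos hq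
  have h1 : Real.log q * (1/q) ≤ Real.log 2 := by
    have h := log_le_div_e hq0
    have h2 : Real.log q * (1/q) ≤ (Real.exp 1)⁻¹ := by
      rw [mul_one_div, div_le_iff₀ hq0]
      calc Real.log q ≤ q * (Real.exp 1)⁻¹ := h
        _ = (Real.exp 1)⁻¹ * q := by ring
    linarith [inv_e_le_log_two]
  have h2 : q ^ (1/q : ℝ) ≤ 2 := by
    rw [Real.rpow_def_of_pos hq0]
    calc Real.exp (Real.log q * (1/q)) ≤ Real.exp (Real.log 2) := Real.exp_le_exp.2 h1
      _ = 2 := Real.exp_log two_pos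
  rw [Real.rpow_neg hq0.le, one_div (2:ℝ)]
  exact inv_anti₀ (by positivity) h2

/-- Scalar inequality `1 + log x ≤ (1 + 1/β) x^β`. -/
lemma one_add_log_le {x β : ℝ} (hx : 1 ≤ x) (hβ0 : 0 < β) :
    1 + Real.log x ≤ (1 + 1/β) * x ^ β := by
  have hx0 : (0:ℝ) < x := lt_of_lt_of_le one_pos hx
  have hy : (1:ℝ) ≤ x ^ β := Real.one_le_rpow hx hβ0.le
  have hlog : Real.log (x ^ β) = β * Real.log x := Real.log_rpow hx0 β
  have h2 : Real.log (x ^ β) ≤ x ^ β - 1 := Real.log_le_sub_one_of_pos (by positivity : (0:ℝ) < x ^ β)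
  rw [← mul_le_mul_iff_of_pos_left hβ0]
  have hexp : β * ((1 + 1/β) * x ^ β) = (β + 1) * x ^ β := by field_simp
  rw [hexp]
  nlinarith [hy, hβ0, h2, hlog]



lemma deriv_nonneg' (hmono : MonotoneOn K (Ioi 0)) (hconc : ConcaveOn ℝ (Ioi 0) K)
    (hdiff : ∀ t, 0 < t → DifferentiableAt ℝ K t) :
    ∀ t, 0 < t → 0 ≤ deriv K t := by
  intro t ht
  have hslope := hconc.slope_le_deriv (mem_Ioi.2 ht) (mem_Ioi.2 (by linarith : (0:ℝ) < t+1))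
    (by linarith) (hdiff t ht)
  rw [slope_def_field] at hslope
  have hKle : K t ≤ K (t+1) :=
    hmono (mem_Ioi.2 ht) (mem_Ioi.2 (by linarith)) (by linarith)
  have : (0:ℝ) ≤ (K (t+1) - K t) / (t + 1 - t) := by
    apply div_nonneg (by linarith) (by linarith)
  linarith

lemma mul_deriv_le (hK0 : ∀ t, 0 < t → 0 ≤ K t) (hmono : MonotoneOn K (Ioi 0))
    (hconc : ConcaveOn ℝ (Ioi 0) K) (hdiff : ∀ t, 0 < t → DifferentiableAt ℝ K t) :
    ∀ t, 0 < t → t * deriv K t ≤ K t := by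
  intro t ht
  have hstep : ∀ s ∈ Ioo (0:ℝ) t, (t - s) * deriv K t ≤ K t := by
    intro s hs
    have hslope := hconc.le_slope_of_hasDerivAt (mem_Ioi.2 hs.1) (mem_Ioi.2 ht) hs.2
      (hdiff t ht).hasDerivAt
    rw [slope_def_field] at hslope
    have hts : (0:ℝ) < t - s := by linarith [hs.2]
    have h1 : (t - s) * deriv K t ≤ K t - K s := by
      rw [← le_div_iff₀' hts]
      exact hslope
    have := hK0 s hs.1
    linarith
  have htend : Tendsto (fun s => (t - s) * deriv K t) (𝓝[>] 0) (𝓝 (t * deriv K t)) := by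
    have hc : Tendsto (fun s => (t - s) * deriv K t) (𝓝 0) (𝓝 ((t - 0) * deriv K t)) := by
      exact ((continuous_const.sub continuous_id).mul continuous_const).tendsto 0
    rw [sub_zero] at hc
    exact hc.mono_left nhdsWithin_le_nhds
  refine le_of_tendsto htend ?_
  filter_upwards [Ioo_mem_nhdsGT ht] with s hs
  exact hstep s hs

lemma K_le_A (hmono : MonotoneOn K (Ioi 0)) (hA : Tendsto K atTop (nhds A)) :
    ∀ t, 0 < t → K t ≤ A := by
  intro t ht
  refine ge_of_tendsto hA ?_
  filter_upwards [eventually_ge_atTop t] with s hs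
  exact hmono (mem_Ioi.2 ht) (mem_Ioi.2 (lt_of_lt_of_le ht hs)) hs

lemma log_bound (hdiff : ∀ t, 0 < t → DifferentiableAt ℝ K t)
    (hM : ∀ t, 0 < t → K t / t - deriv K t ≤ M) :
    ∀ s u : ℝ, 0 < s → s ≤ u → K s / s ≤ K u / u + M * Real.log (u / s) := by
  have hgd : ∀ x ∈ interior (Ioi (0:ℝ)),
      HasDerivAt (fun u => K u / u + M * Real.log u)
        ((deriv K x * x - K x * 1) / x ^ 2 + M * x⁻¹) x := by
    rw [interior_Ioi]
    intro x hx
    have hx0 : (0:ℝ) < x := hx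
    exact ((hdiff x hx0).hasDerivAt.div (hasDerivAt_id x) hx0.ne').add
      ((Real.hasDerivAt_log hx0.ne').const_mul M)
  have hmonog : MonotoneOn (fun u => K u / u + M * Real.log u) (Ioi 0) := by
    apply monotoneOn_of_deriv_nonneg (convex_Ioi 0)
    · intro x hx
      exact ((hgd x (by rwa [interior_Ioi])).continuousAt).continuousWithinAt
    · intro x hx
      exact ((hgd x hx).differentiableAt).differentiableWithinAt
    · intro x hx
      rw [(hgd x hx).deriv]
      rw [interior_Ioi] at hx
      have hx0 : (0:ℝ) < x := hx
      have h1 : K x / x - deriv K x ≤ M := hM x hx0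
      have h2 : K x ≤ (M + deriv K x) * x := by
        rw [← div_le_iff₀ hx0]
        linarith
      have e : (deriv K x * x - K x * 1) / x ^ 2 + M * x⁻¹
          = ((deriv K x * x - K x) + M * x) / x ^ 2 := by
        field_simp
      rw [e]
      apply div_nonneg (by nlinarith) (by positivity)
  intro s u hs hsu
  have hu : (0:ℝ) < u := lt_of_lt_of_le hs hsu
  have := hmonog (mem_Ioi.2 hs) (mem_Ioi.2 hu) hsu
  have hlog : Real.log (u / s) = Real.log u - Real.log s := Real.log_div hu.ne' hs.ne'
  simp only at this
  rw [hlog]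
  linarith



lemma tail_lintegral (hK0 : ∀ t, 0 < t → 0 ≤ K t)
    (hconc : ConcaveOn ℝ (Ioi 0) K)
    (hdiff : ∀ t, 0 < t → DifferentiableAt ℝ K t)
    (hKA : ∀ t, 0 < t → K t ≤ A)
    {r : ℝ} (hr : 0 < r)
    (hd0 : ∀ t, 0 < t → 0 ≤ deriv K t) :
    ∫⁻ t in Ioi r, ENNReal.ofReal (deriv K t) ≤ ENNReal.ofReal A := by
  have hanti : AntitoneOn (deriv K) (Ioi 0) := hconc.antitoneOn_deriv hdiff
  have hmeas : Measurable fun t => ENNReal.ofReal (deriv K t) :=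
    (measurable_deriv K).ennreal_ofReal
  have hbound : ∀ n : ℕ, ∫⁻ t in Ioc r (r + n), ENNReal.ofReal (deriv K t)
      ≤ ENNReal.ofReal A := by
    intro n
    have hrn : r ≤ r + n := le_add_of_nonneg_right (Nat.cast_nonneg n)
    have hsub : Icc r (r + (n:ℝ)) ⊆ Ioi 0 := fun x hx => lt_of_lt_of_le hr hx.1
    have hint : IntervalIntegrable (deriv K) volume r (r + n) := by
      apply AntitoneOn.intervalIntegrable
      rw [uIcc_of_le hrn]
      exact hanti.mono hsub
    have hFTC : ∫ u in r..(r + n), deriv K u = K (r + n) - K r := by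
      apply intervalIntegral.integral_eq_sub_of_hasDerivAt
      · intro x hx
        rw [uIcc_of_le hrn] at hx
        exact (hdiff x (hsub hx)).hasDerivAt
      · exact hint
    have hig : IntegrableOn (deriv K) (Ioc r (r + n)) := by
      rw [← intervalIntegrable_iff_integrableOn_Ioc_of_le hrn]
      exact hint
    rw [← ofReal_integral_eq_lintegral_ofReal hig
      ((ae_restrict_iff' measurableSet_Ioc).2 (ae_of_all _
        (fun t ht => hd0 t (lt_trans hr ht.1))))]
    rw [← intervalIntegral.integral_of_le hrn, hFTC]
    apply ENNReal.ofReal_le_ofReal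
    have h1 := hKA (r + n) (lt_of_lt_of_le hr hrn)
    have h2 := hK0 r hr
    linarith
  have hmonoSet : Monotone (fun n : ℕ =>
      (Ioc r (r + (n:ℝ))).indicator (fun t => ENNReal.ofReal (deriv K t))) := by
    intro m n hmn
    apply indicator_le_indicator_of_subset
    · apply Ioc_subset_Ioc_right
      have : (m:ℝ) ≤ n := Nat.cast_le.2 hmn
      linarith
    · intro x
      exact bot_le
  have hsup : ∀ x, (⨆ n : ℕ, (Ioc r (r + (n:ℝ))).indicator
      (fun t => ENNReal.ofReal (deriv K t)) x)
      = (Ioi r).indicator (fun t => ENNReal.ofReal (deriv K t)) x := by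
    intro x
    by_cases hx : x ∈ Ioi r
    · obtain ⟨n, hn⟩ := exists_nat_ge (x - r)
      rw [indicator_of_mem hx]
      apply le_antisymm
      · apply iSup_le
        intro m
        by_cases hm : x ∈ Ioc r (r + (m:ℝ))
        · rw [indicator_of_mem hm]
        · rw [indicator_of_notMem hm]
          exact bot_le
      · apply le_iSup_of_le n
        rw [indicator_of_mem (show x ∈ Ioc r (r + (n:ℝ)) from ⟨hx, by linarith⟩)]
    · rw [indicator_of_notMem hx]
      rw [mem_Ioi, not_lt] at hx
      apply le_antisymm _ (by simp)
      apply iSup_le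
      intro m
      rw [indicator_of_notMem (fun hm => absurd hm.1 (not_lt.2 hx))]
  calc ∫⁻ t in Ioi r, ENNReal.ofReal (deriv K t)
      = ∫⁻ t, (Ioi r).indicator (fun t => ENNReal.ofReal (deriv K t)) t :=
        (lintegral_indicator measurableSet_Ioi _).symm
    _ = ∫⁻ t, ⨆ n : ℕ, (Ioc r (r + (n:ℝ))).indicator
          (fun t => ENNReal.ofReal (deriv K t)) t := by
        apply lintegral_congr
        intro x
        exact (hsup x).symm
    _ = ⨆ n : ℕ, ∫⁻ t, (Ioc r (r + (n:ℝ))).indicator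
          (fun t => ENNReal.ofReal (deriv K t)) t :=
        lintegral_iSup (fun n => hmeas.indicator measurableSet_Ioc) hmonoSet
    _ = ⨆ n : ℕ, ∫⁻ t in Ioc r (r + (n:ℝ)), ENNReal.ofReal (deriv K t) := by
        apply iSup_congr
        intro n
        exact lintegral_indicator measurableSet_Ioc _
    _ ≤ ENNReal.ofReal A := iSup_le hbound

/-- The main scalar inequality. -/
lemma star_ineq {θ q : ℝ} (hθ0 : 0 ≤ θ) (hθ1 : θ < 1) (hq : 1 ≤ q) :
    (1 + 2*q/((1-θ)*q)) * (2/((1-θ)*q)) ^ (1/q) + 1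
      ≤ 16 * q * ((1 + ((1-θ)*q) ^ (1/q)) ^ (1-θ) * ((1-θ)*q) ^ (-θ - 1/q)) := by
  have hq0 : (0:ℝ) < q := lt_of_lt_of_le one_pos hq
  set α := (1-θ)*q with hα_def
  have hα0 : 0 < α := by
    have h1θ : 0 < 1 - θ := by linarith
    positivity
  have hαq : α ≤ q := by rw [hα_def]; nlinarith
  set X := q * α ^ (-1 - 1/q : ℝ) with hX_def
  have hXpos : 0 < X := by
    have := Real.rpow_pos_of_pos hα0 (-1 - 1/q)
    positivity
  have hX : (1:ℝ)/2 ≤ X := by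
    have h4 : q ^ (-1 - 1/q : ℝ) ≤ α ^ (-1 - 1/q : ℝ) :=
      Real.rpow_le_rpow_of_nonpos hα0 hαq
        (by have h : (0:ℝ) < 1/q := by positivity
            linarith)
    have e1 : q * q ^ (-1 - 1/q : ℝ) = q ^ (-(1/q) : ℝ) := by
      rw [show (-1 - 1/q : ℝ) = (-(1/q)) + (-1) by ring, Real.rpow_add hq0, Real.rpow_neg_one]
      field_simp
    calc (1:ℝ)/2 ≤ q ^ (-(1/q) : ℝ) := rpow_neg_inv_ge_half hq
      _ = q * q ^ (-1 - 1/q : ℝ) := e1.symm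
      _ ≤ q * α ^ (-1 - 1/q : ℝ) := mul_le_mul_of_nonneg_left h4 hq0.le
  set Z := ((1 + α ^ (1/q : ℝ)) * α) ^ (1-θ : ℝ) with hZ_def
  have hZ : (1:ℝ)/2 ≤ Z := by
    rcases le_or_gt 1 ((1 + α ^ (1/q : ℝ)) * α) with h | h
    · have := Real.one_le_rpow h (by linarith : (0:ℝ) ≤ 1-θ)
      linarith
    · have hrnn : (0:ℝ) ≤ α ^ (1/q : ℝ) := Real.rpow_nonneg hα0.le _
      have hαlt1 : α < 1 := by nlinarith
      have hz : α ≤ (1 + α ^ (1/q:ℝ)) * α := by nlinarith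
      have h1 : α ^ (1-θ:ℝ) ≤ Z := Real.rpow_le_rpow hα0.le hz (by linarith)
      have h2 : (1-θ:ℝ) = α/q := by rw [hα_def]; field_simp
      have h3 : α ^ (α:ℝ) ≤ α ^ (α/q : ℝ) :=
        Real.rpow_le_rpow_of_exponent_ge hα0 hαlt1.le (div_le_self hα0.le hq)
      calc (1:ℝ)/2 ≤ α ^ (α:ℝ) := rpow_self_ge_half hα0 hαlt1.le
        _ ≤ α ^ (α/q : ℝ) := h3
        _ = α ^ (1-θ : ℝ) := by rw [h2]
        _ ≤ Z := h1
  have hL1 : (1 + 2*q/α) ≤ 3*(q/α) := by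
    have h5 : 1 ≤ q/α := (one_le_div hα0).2 hαq
    have e : 2*q/α = 2*(q/α) := by ring
    linarith [e.le, e.ge]
  have hL2 : (2/α) ^ (1/q : ℝ) ≤ 2 * α ^ (-(1/q) : ℝ) := by
    rw [Real.div_rpow (by norm_num) hα0.le, Real.rpow_neg hα0.le]
    have h21 : (2:ℝ) ^ (1/q:ℝ) ≤ 2 := by
      calc (2:ℝ)^(1/q:ℝ) ≤ 2^(1:ℝ) :=
            Real.rpow_le_rpow_of_exponent_le one_le_two (by rw [div_le_one hq0]; exact hq)
        _ = 2 := Real.rpow_one 2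
    calc (2:ℝ) ^ (1/q:ℝ) / α ^ (1/q:ℝ) ≤ 2 / α^(1/q:ℝ) := by gcongr
      _ = 2 * (α^(1/q:ℝ))⁻¹ := by rw [div_eq_mul_inv]
  have hmul : (1 + 2*q/α) * (2/α)^(1/q:ℝ) ≤ (3*(q/α)) * (2 * α^(-(1/q):ℝ)) := by
    apply mul_le_mul hL1 hL2 (Real.rpow_nonneg (by positivity) _) (by positivity)
  have e2 : (3*(q/α)) * (2 * α^(-(1/q):ℝ)) = 6*X := by
    rw [hX_def, show (-1 - 1/q:ℝ) = (-1) + (-(1/q)) by ring, Real.rpow_add hα0,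
      Real.rpow_neg_one]
    field_simp
    ring
  have hF : (1 + α^(1/q:ℝ))^(1-θ:ℝ) * α^(-θ-1/q:ℝ) = Z * α^(-1-1/q:ℝ) := by
    rw [hZ_def, Real.mul_rpow (by positivity) hα0.le, mul_assoc, ← Real.rpow_add hα0]
    congr 2
    ring
  rw [hF]
  have e3 : 16*q*(Z*α^(-1-1/q:ℝ)) = 16*Z*X := by rw [hX_def]; ring
  rw [e3]
  nlinarith [mul_le_mul_of_nonneg_right hZ hXpos.le, hX]
/-- Main estimate in the nondegenerate case. -/
lemma key {θ q : ℝ} (hK0 : ∀ t, 0 < t → 0 ≤ K t) (hmono : MonotoneOn K (Ioi 0))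
    (hconc : ConcaveOn ℝ (Ioi 0) K)
    (hdiff : ∀ t, 0 < t → DifferentiableAt ℝ K t)
    (hKA : ∀ t, 0 < t → K t ≤ A)
    (hd0 : ∀ t, 0 < t → 0 ≤ deriv K t)
    (hdK : ∀ t, 0 < t → t * deriv K t ≤ K t)
    (hlog : ∀ s u : ℝ, 0 < s → s ≤ u → K s / s ≤ K u / u + M * Real.log (u / s))
    (hθ0 : 0 ≤ θ) (hθ1 : θ < 1) (hq : 1 ≤ q)
    (hA0 : 0 < A) (hM0 : 0 < M) :
    (∫⁻ t in Ioi (0:ℝ), ENNReal.ofReal ((t ^ (1 - θ) * deriv K t) ^ q / t)) ^ (1/q)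
      ≤ ENNReal.ofReal ((A ^ (1-θ) * M ^ θ) *
          ((1 + 2*q/((1-θ)*q)) * (2/((1-θ)*q)) ^ (1/q) + 1)) := by
  have hq0 : (0:ℝ) < q := lt_of_lt_of_le one_pos hq
  set α := (1-θ)*q with hα_def
  have h1θ : (0:ℝ) < 1 - θ := by linarith
  have hα0 : 0 < α := by positivity
  have hαq : α ≤ q := by rw [hα_def]; nlinarith
  set r := A / M with hr_def
  have hr0 : 0 < r := by positivity
  set B := A ^ (1-θ) * M ^ θ with hB_def
  have hB0 : 0 < B := by
    have := Real.rpow_pos_of_pos hA0 (1-θ)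
    have := Real.rpow_pos_of_pos hM0 θ
    positivity
  set G := 1 + 2*q/α with hG_def
  have hG0 : 0 < G := by positivity
  -- B^q = A^α * M^(θ*q)
  have hBq : B ^ (q:ℝ) = A ^ (α:ℝ) * M ^ (θ*q : ℝ) := by
    rw [hB_def, Real.mul_rpow (Real.rpow_nonneg hA0.le _) (Real.rpow_nonneg hM0.le _),
      ← Real.rpow_mul hA0.le, ← Real.rpow_mul hM0.le, hα_def]
  -- split the integral
  have hsplit : (∫⁻ t in Ioi (0:ℝ), ENNReal.ofReal ((t ^ (1 - θ) * deriv K t) ^ q / t))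
      = (∫⁻ t in Ioc (0:ℝ) r, ENNReal.ofReal ((t ^ (1 - θ) * deriv K t) ^ q / t))
        + ∫⁻ t in Ioi r, ENNReal.ofReal ((t ^ (1 - θ) * deriv K t) ^ q / t) := by
    rw [← Ioc_union_Ioi_eq_Ioi hr0.le, lintegral_union measurableSet_Ioi Ioc_disjoint_Ioi_same]
  -- C₁ for the small part
  set C₁ := M ^ (q:ℝ) * G ^ (q:ℝ) * r ^ (α/2 : ℝ) with hC₁_def
  have hC₁0 : 0 ≤ C₁ := by
    have := Real.rpow_nonneg hM0.le (q:ℝ)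
    have := Real.rpow_nonneg hG0.le (q:ℝ)
    have := Real.rpow_nonneg hr0.le (α/2:ℝ)
    positivity
  -- pointwise bound on (0, r]
  have hptw1 : ∀ t ∈ Ioc (0:ℝ) r,
      ENNReal.ofReal ((t ^ (1 - θ) * deriv K t) ^ q / t)
        ≤ ENNReal.ofReal (C₁ * t ^ (α/2 - 1 : ℝ)) := by
    rintro t ⟨ht0, htr⟩
    apply ENNReal.ofReal_le_ofReal
    have hd0t : 0 ≤ deriv K t := hd0 t ht0
    set L := Real.log (r / t) with hL_def
    have hrt1 : 1 ≤ r / t := (one_le_div ht0).2 htr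
    have hL0 : 0 ≤ L := Real.log_nonneg hrt1
    have hub : deriv K t ≤ M * (1 + L) := by
      have h1 : deriv K t ≤ K t / t := by
        rw [le_div_iff₀ ht0]
        linarith [hdK t ht0]
      have h2 := hlog t r ht0 htr
      have h3 : K r / r ≤ M := by
        rw [div_le_iff₀ hr0]
        calc K r ≤ A := hKA r hr0
          _ = M * r := by rw [hr_def]; field_simp
      have := hK0 t ht0
      nlinarith [h1, h2, h3]
    have hMl0 : 0 ≤ M * (1 + L) := by positivity
    -- the β-trick
    have hβ0 : (0:ℝ) < α/(2*q) := by positivity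
    have hlogb : 1 + L ≤ G * (r/t) ^ (α/(2*q) : ℝ) := by
      have := one_add_log_le hrt1 hβ0
      rw [hL_def]
      calc 1 + Real.log (r/t) ≤ (1 + 1/(α/(2*q))) * (r/t) ^ (α/(2*q) : ℝ) := this
        _ = G * (r/t) ^ (α/(2*q) : ℝ) := by
            rw [hG_def]
            congr 1
            field_simp
    -- main chain
    have e1 : (t ^ (1-θ:ℝ) * deriv K t) ^ (q:ℝ) = t ^ (α:ℝ) * (deriv K t) ^ (q:ℝ) := by
      rw [Real.mul_rpow (Real.rpow_nonneg ht0.le _) hd0t, ← Real.rpow_mul ht0.le, hα_def]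
    have e2 : (deriv K t) ^ (q:ℝ) ≤ (M * (1+L)) ^ (q:ℝ) :=
      Real.rpow_le_rpow hd0t hub hq0.le
    have e3 : (M * (1+L)) ^ (q:ℝ) ≤ M ^ (q:ℝ) * (G ^ (q:ℝ) * (r/t) ^ (α/2 : ℝ)) := by
      rw [Real.mul_rpow hM0.le (by linarith)]
      apply mul_le_mul_of_nonneg_left _ (Real.rpow_nonneg hM0.le _)
      calc (1+L) ^ (q:ℝ) ≤ (G * (r/t) ^ (α/(2*q):ℝ)) ^ (q:ℝ) :=
            Real.rpow_le_rpow (by linarith) hlogb hq0.le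
        _ = G ^ (q:ℝ) * (r/t) ^ (α/2 : ℝ) := by
            rw [Real.mul_rpow hG0.le (Real.rpow_nonneg (by positivity) _),
              ← Real.rpow_mul (by positivity : (0:ℝ) ≤ r/t)]
            congr 2
            field_simp
    have e4 : (r/t) ^ (α/2:ℝ) = r ^ (α/2:ℝ) / t ^ (α/2:ℝ) :=
      Real.div_rpow hr0.le ht0.le _
    rw [e4] at e3
    -- combine
    have hchain : (t ^ (1-θ:ℝ) * deriv K t) ^ (q:ℝ) / t
        ≤ t ^ (α:ℝ) * (M ^ (q:ℝ) * (G ^ (q:ℝ) * (r ^ (α/2:ℝ) / t ^ (α/2:ℝ)))) / t := by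
      have e23 := e2.trans e3
      rw [e1]
      gcongr
    have ht1 : t ^ (α:ℝ) / t ^ (α/2:ℝ) = t ^ (α/2:ℝ) := by
      rw [← Real.rpow_sub ht0, show (α:ℝ) - α/2 = α/2 by ring]
    have ht2 : t ^ (α/2 - 1:ℝ) = t ^ (α/2:ℝ) / t := Real.rpow_sub_one ht0.ne' _
    calc (t ^ (1-θ:ℝ) * deriv K t) ^ (q:ℝ) / t
        ≤ t ^ (α:ℝ) * (M ^ (q:ℝ) * (G ^ (q:ℝ) * (r ^ (α/2:ℝ) / t ^ (α/2:ℝ)))) / t := hchain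
      _ = C₁ * (t ^ (α:ℝ) / t ^ (α/2:ℝ) / t) := by rw [hC₁_def]; ring
      _ = C₁ * t ^ (α/2 - 1:ℝ) := by rw [ht1, ← ht2]
  -- value of the dominating integral
  have hJ1 : (∫⁻ t in Ioc (0:ℝ) r, ENNReal.ofReal (C₁ * t ^ (α/2 - 1 : ℝ)))
      = ENNReal.ofReal (C₁ * (r ^ (α/2:ℝ) / (α/2))) := by
    have hexp : (-1:ℝ) < α/2 - 1 := by linarith
    have hii : IntervalIntegrable (fun t : ℝ => C₁ * t ^ (α/2 - 1 : ℝ)) volume 0 r :=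
      (intervalIntegral.intervalIntegrable_rpow' hexp).const_mul C₁
    have hig : IntegrableOn (fun t : ℝ => C₁ * t ^ (α/2 - 1 : ℝ)) (Ioc 0 r) := by
      rw [← intervalIntegrable_iff_integrableOn_Ioc_of_le hr0.le]
      exact hii
    rw [← ofReal_integral_eq_lintegral_ofReal hig
      ((ae_restrict_iff' measurableSet_Ioc).2 (ae_of_all _ (fun t ht =>
        mul_nonneg hC₁0 (Real.rpow_nonneg ht.1.le _))))]
    congr 1
    rw [← intervalIntegral.integral_of_le hr0.le, intervalIntegral.integral_const_mul,
      integral_rpow (Or.inl hexp)]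
    rw [show (α/2 - 1 + 1 : ℝ) = α/2 by ring, Real.zero_rpow (by positivity : (α/2:ℝ) ≠ 0)]
    ring
  -- small part conclusion
  have hsmall : (∫⁻ t in Ioc (0:ℝ) r, ENNReal.ofReal ((t ^ (1 - θ) * deriv K t) ^ q / t))
      ≤ ENNReal.ofReal (B ^ (q:ℝ) * (G ^ (q:ℝ) * (2/α))) := by
    calc (∫⁻ t in Ioc (0:ℝ) r, ENNReal.ofReal ((t ^ (1 - θ) * deriv K t) ^ q / t))
        ≤ ∫⁻ t in Ioc (0:ℝ) r, ENNReal.ofReal (C₁ * t ^ (α/2 - 1 : ℝ)) :=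
          setLIntegral_mono' measurableSet_Ioc hptw1
      _ = ENNReal.ofReal (C₁ * (r ^ (α/2:ℝ) / (α/2))) := hJ1
      _ = ENNReal.ofReal (B ^ (q:ℝ) * (G ^ (q:ℝ) * (2/α))) := by
          congr 1
          rw [hC₁_def, hBq]
          have hrr : r ^ (α/2:ℝ) * r ^ (α/2:ℝ) = r ^ (α:ℝ) := by
            rw [← Real.rpow_add hr0, show (α/2 + α/2 : ℝ) = α by ring]
          have hrα : M ^ (q:ℝ) * r ^ (α:ℝ) = A ^ (α:ℝ) * M ^ (θ*q:ℝ) := by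
            rw [hr_def, Real.div_rpow hA0.le hM0.le]
            rw [div_eq_mul_inv, ← Real.rpow_neg hM0.le, mul_comm (A ^ (α:ℝ)) _, ← mul_assoc,
              ← Real.rpow_add hM0, show (q + -α : ℝ) = θ*q by rw [hα_def]; ring]
            ring
          calc M ^ (q:ℝ) * G ^ (q:ℝ) * r ^ (α/2:ℝ) * (r ^ (α/2:ℝ) / (α/2))
              = (M ^ (q:ℝ) * (r ^ (α/2:ℝ) * r ^ (α/2:ℝ))) * (G ^ (q:ℝ) * (2/α)) := by
                field_simp
            _ = A ^ (α:ℝ) * M ^ (θ*q:ℝ) * (G ^ (q:ℝ) * (2/α)) := by rw [hrr, hrα]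
  -- tail part
  set C₂ := r ^ (α - q : ℝ) * A ^ (q - 1 : ℝ) with hC₂_def
  have hC₂0 : 0 ≤ C₂ := by
    have := Real.rpow_nonneg hr0.le (α - q : ℝ)
    have := Real.rpow_nonneg hA0.le (q - 1 : ℝ)
    positivity
  have hptw2 : ∀ t ∈ Ioi r,
      ENNReal.ofReal ((t ^ (1 - θ) * deriv K t) ^ q / t)
        ≤ ENNReal.ofReal (C₂ * deriv K t) := by
    intro t htr
    rw [mem_Ioi] at htr
    have ht0 : (0:ℝ) < t := lt_trans hr0 htr
    have hd0t : 0 ≤ deriv K t := hd0 t ht0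
    apply ENNReal.ofReal_le_ofReal
    rcases eq_or_lt_of_le hd0t with hdz | hdp
    · rw [← hdz, mul_zero, Real.zero_rpow hq0.ne', zero_div]
      positivity
    · have e1 : (t ^ (1-θ:ℝ) * deriv K t) ^ (q:ℝ) = t ^ (α:ℝ) * (deriv K t) ^ (q:ℝ) := by
        rw [Real.mul_rpow (Real.rpow_nonneg ht0.le _) hd0t, ← Real.rpow_mul ht0.le, hα_def]
      have hdA : deriv K t ≤ A / t := by
        rw [le_div_iff₀ ht0]
        nlinarith [hdK t ht0, hKA t ht0]
      have e2 : (deriv K t) ^ (q:ℝ) = (deriv K t) ^ (q-1:ℝ) * deriv K t := by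
        rw [← Real.rpow_add_one hdp.ne' (q-1:ℝ), show (q-1+1:ℝ) = q by ring]
      have e3 : (deriv K t) ^ (q-1:ℝ) ≤ (A/t) ^ (q-1:ℝ) :=
        Real.rpow_le_rpow hd0t hdA (by linarith)
      have e4 : (A/t) ^ (q-1:ℝ) = A ^ (q-1:ℝ) / t ^ (q-1:ℝ) := Real.div_rpow hA0.le ht0.le _
      have e5a : t ^ (α:ℝ) / t ^ (q-1:ℝ) = t ^ (α-q+1:ℝ) := by
        rw [← Real.rpow_sub ht0, show (α - (q-1) : ℝ) = α-q+1 by ring]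
      have e5b : t ^ (α-q+1:ℝ) / t = t ^ (α-q:ℝ) := by
        have h := Real.rpow_sub_one ht0.ne' (α-q+1)
        rw [show (α-q+1-1:ℝ) = α-q by ring] at h
        exact h.symm
      have e5 : t ^ (α:ℝ) * (A ^ (q-1:ℝ) / t ^ (q-1:ℝ)) / t = A ^ (q-1:ℝ) * t ^ (α - q:ℝ) := by
        rw [← e5b, ← e5a]
        ring
      have e6 : t ^ (α - q:ℝ) ≤ r ^ (α - q:ℝ) :=
        Real.rpow_le_rpow_of_nonpos hr0 htr.le (by linarith)
      calc (t ^ (1-θ:ℝ) * deriv K t) ^ (q:ℝ) / t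
          = t ^ (α:ℝ) * ((deriv K t) ^ (q-1:ℝ) * deriv K t) / t := by rw [e1, e2]
        _ ≤ t ^ (α:ℝ) * ((A/t) ^ (q-1:ℝ) * deriv K t) / t := by
            gcongr
        _ = (t ^ (α:ℝ) * (A ^ (q-1:ℝ) / t ^ (q-1:ℝ)) / t) * deriv K t := by rw [e4]; ring
        _ = (A ^ (q-1:ℝ) * t ^ (α - q:ℝ)) * deriv K t := by rw [e5]
        _ ≤ (A ^ (q-1:ℝ) * r ^ (α - q:ℝ)) * deriv K t := by
            gcongr
        _ = C₂ * deriv K t := by rw [hC₂_def]; ring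
  have hlarge : (∫⁻ t in Ioi r, ENNReal.ofReal ((t ^ (1 - θ) * deriv K t) ^ q / t))
      ≤ ENNReal.ofReal (B ^ (q:ℝ)) := by
    have hC₂A : C₂ * A = B ^ (q:ℝ) := by
      rw [hC₂_def, hBq, hr_def, Real.div_rpow hA0.le hM0.le]
      rw [div_eq_mul_inv, ← Real.rpow_neg hM0.le]
      have h7 : A ^ (α - q:ℝ) * A ^ (q-1:ℝ) * A = A ^ (α:ℝ) := by
        rw [← Real.rpow_add hA0, ← Real.rpow_add_one hA0.ne',
          show (α - q + (q-1) + 1 : ℝ) = α by ring]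
      have h8 : (-(α - q) : ℝ) = θ*q := by rw [hα_def]; ring
      rw [h8]
      calc A ^ (α - q:ℝ) * M ^ (θ*q:ℝ) * A ^ (q-1:ℝ) * A
          = (A ^ (α - q:ℝ) * A ^ (q-1:ℝ) * A) * M ^ (θ*q:ℝ) := by ring
        _ = A ^ (α:ℝ) * M ^ (θ*q:ℝ) := by rw [h7]
    calc (∫⁻ t in Ioi r, ENNReal.ofReal ((t ^ (1 - θ) * deriv K t) ^ q / t))
        ≤ ∫⁻ t in Ioi r, ENNReal.ofReal (C₂ * deriv K t) :=
          setLIntegral_mono' measurableSet_Ioi hptw2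
      _ = ∫⁻ t in Ioi r, ENNReal.ofReal C₂ * ENNReal.ofReal (deriv K t) := by
          apply lintegral_congr
          intro t
          rw [ENNReal.ofReal_mul hC₂0]
      _ = ENNReal.ofReal C₂ * ∫⁻ t in Ioi r, ENNReal.ofReal (deriv K t) :=
          lintegral_const_mul _ (measurable_deriv K).ennreal_ofReal
      _ ≤ ENNReal.ofReal C₂ * ENNReal.ofReal A := by
          exact mul_le_mul_right (tail_lintegral hK0 hconc hdiff hKA hr0 hd0) _
      _ = ENNReal.ofReal (C₂ * A) := (ENNReal.ofReal_mul hC₂0).symm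
      _ = ENNReal.ofReal (B ^ (q:ℝ)) := by rw [hC₂A]
  -- combine the two parts
  have hq1 : (0:ℝ) ≤ 1/q := by positivity
  have hq1' : (1:ℝ)/q ≤ 1 := by rw [div_le_one hq0]; exact hq
  have hP1 : (B ^ (q:ℝ) * (G ^ (q:ℝ) * (2/α))) ^ (1/q : ℝ)
      = B * (G * (2/α) ^ (1/q:ℝ)) := by
    rw [Real.mul_rpow (Real.rpow_nonneg hB0.le _)
        (mul_nonneg (Real.rpow_nonneg hG0.le _) (by positivity)),
      Real.mul_rpow (Real.rpow_nonneg hG0.le _) (by positivity),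
      ← Real.rpow_mul hB0.le, ← Real.rpow_mul hG0.le,
      mul_one_div_cancel hq0.ne', Real.rpow_one, Real.rpow_one]
  have hP2 : (B ^ (q:ℝ)) ^ (1/q : ℝ) = B := by
    rw [← Real.rpow_mul hB0.le, mul_one_div_cancel hq0.ne', Real.rpow_one]
  calc (∫⁻ t in Ioi (0:ℝ), ENNReal.ofReal ((t ^ (1 - θ) * deriv K t) ^ q / t)) ^ (1/q)
      = ((∫⁻ t in Ioc (0:ℝ) r, ENNReal.ofReal ((t ^ (1 - θ) * deriv K t) ^ q / t))
          + ∫⁻ t in Ioi r, ENNReal.ofReal ((t ^ (1 - θ) * deriv K t) ^ q / t)) ^ (1/q) := by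
        rw [hsplit]
    _ ≤ (ENNReal.ofReal (B ^ (q:ℝ) * (G ^ (q:ℝ) * (2/α)))
          + ENNReal.ofReal (B ^ (q:ℝ))) ^ (1/q) := by
        apply ENNReal.rpow_le_rpow _ hq1
        exact add_le_add hsmall hlarge
    _ ≤ (ENNReal.ofReal (B ^ (q:ℝ) * (G ^ (q:ℝ) * (2/α)))) ^ (1/q)
          + (ENNReal.ofReal (B ^ (q:ℝ))) ^ (1/q) :=
        ENNReal.rpow_add_le_add_rpow _ _ hq1 hq1'
    _ = ENNReal.ofReal (B * (G * (2/α) ^ (1/q:ℝ))) + ENNReal.ofReal B := by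
        rw [ENNReal.ofReal_rpow_of_nonneg (by positivity) hq1,
          ENNReal.ofReal_rpow_of_nonneg (Real.rpow_nonneg hB0.le _) hq1, hP1, hP2]
    _ = ENNReal.ofReal (B * (G * (2/α) ^ (1/q:ℝ)) + B) := by
        rw [ENNReal.ofReal_add (by positivity) hB0.le]
    _ = ENNReal.ofReal (B * (G * (2/α) ^ (1/q:ℝ) + 1)) := by ring_nf
    _ = ENNReal.ofReal ((A ^ (1-θ) * M ^ θ) *
          ((1 + 2*q/((1-θ)*q)) * (2/((1-θ)*q)) ^ (1/q) + 1)) := by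
        rw [hB_def, hG_def, hα_def]


end JN16

open JN16 Topology in
/-- Abstract (scalar) form of the generalized John–Nirenberg inequality:
with `K` a K-functional (nonnegative, nondecreasing, concave, differentiable),
`A = lim_{t→∞} K(t)` and `M ≥ sup_{t>0} (K(t)/t - K'(t))`, one has
`(∫_0^∞ (t^{1-θ}K'(t))^q dt/t)^{1/q}
  ≤ c q (1+[(1-θ)q]^{1/q})^{1-θ} [(1-θ)q]^{-θ-1/q} A^{1-θ} M^{θ}`,
and in particular `≤ c q A^{1-θ} M^{θ}` when `(1-θ)q = 1`. -/
theorem stmt16 : ∃ c : ℝ, 0 < c ∧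
    ∀ (K : ℝ → ℝ) (A M θ q : ℝ),
    (∀ t, 0 < t → 0 ≤ K t) → MonotoneOn K (Ioi 0) → ConcaveOn ℝ (Ioi 0) K →
    (∀ t, 0 < t → DifferentiableAt ℝ K t) →
    Tendsto K atTop (nhds A) →
    (∀ t, 0 < t → K t / t - deriv K t ≤ M) →
    0 ≤ θ → θ < 1 → 1 ≤ q →
    ((∫⁻ t in Ioi (0:ℝ), ENNReal.ofReal ((t ^ (1 - θ) * deriv K t) ^ q / t)) ^ (1/q)
        ≤ ENNReal.ofReal (c * q * (1 + ((1 - θ) * q) ^ (1/q)) ^ (1 - θ) *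
            ((1 - θ) * q) ^ (-θ - 1/q) * (A ^ (1 - θ) * M ^ θ))) ∧
      ((1 - θ) * q = 1 →
        (∫⁻ t in Ioi (0:ℝ), ENNReal.ofReal ((t ^ (1 - θ) * deriv K t) ^ q / t)) ^ (1/q)
          ≤ ENNReal.ofReal (c * q * (A ^ (1 - θ) * M ^ θ))) := by
  refine ⟨32, by norm_num, ?_⟩
  intro K A M θ q hK0 hmono hconc hdiff hA hM hθ0 hθ1 hq
  have hq0 : (0:ℝ) < q := lt_of_lt_of_le one_pos hq
  have h1θ : (0:ℝ) < 1 - θ := by linarith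
  have hKA := K_le_A hmono hA
  have hd0 := deriv_nonneg' hmono hconc hdiff
  have hdK := mul_deriv_le hK0 hmono hconc hdiff
  have hlogK := log_bound hdiff hM
  have hM0' : 0 ≤ M := by
    have h1 := hM 1 one_pos
    have h2 := hdK 1 one_pos
    rw [div_one] at h1
    linarith
  by_cases hdeg : ∀ t : ℝ, 0 < t → K t = 0
  · -- degenerate case: `K` vanishes, both sides trivial
    have hder : ∀ t : ℝ, 0 < t → deriv K t = 0 := by
      intro t ht
      have hev : K =ᶠ[nhds t] fun _ => (0:ℝ) := by
        filter_upwards [IsOpen.mem_nhds isOpen_Ioi (mem_Ioi.2 ht)] with s hs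
        exact hdeg s hs
      rw [hev.deriv_eq]
      exact deriv_const t 0
    have hzero : (∫⁻ t in Ioi (0:ℝ),
        ENNReal.ofReal ((t ^ (1 - θ) * deriv K t) ^ q / t)) = 0 := by
      have hcong : ∀ᵐ x ∂(volume : Measure ℝ), x ∈ Ioi (0:ℝ) →
          ENNReal.ofReal ((x ^ (1 - θ) * deriv K x) ^ q / x) = (0 : ENNReal) := by
        apply ae_of_all
        intro x hx
        rw [hder x hx, mul_zero, Real.zero_rpow hq0.ne', zero_div, ENNReal.ofReal_zero]
      rw [setLIntegral_congr_fun measurableSet_Ioi (fun x hx => by rw [hder x hx, mul_zero, Real.zero_rpow hq0.ne', zero_div, ENNReal.ofReal_zero]), lintegral_zero]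
    rw [hzero, ENNReal.zero_rpow_of_pos (by positivity)]
    exact ⟨bot_le, fun _ => bot_le⟩
  · push_neg at hdeg
    obtain ⟨t₀, ht₀, hKt₀⟩ := hdeg
    have hKt₀' : 0 < K t₀ := lt_of_le_of_ne (hK0 t₀ ht₀) (Ne.symm hKt₀)
    have hA0 : 0 < A := lt_of_lt_of_le hKt₀' (hKA t₀ ht₀)
    have hM0 : 0 < M := by
      rcases lt_or_eq_of_le hM0' with h | h
      · exact h
      · exfalso
        -- if M = 0, then K t₀ / t₀ ≤ A / u for all u ≥ t₀, forcing K t₀ = 0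
        have hbound : ∀ u : ℝ, t₀ ≤ u → K t₀ / t₀ ≤ A / u := by
          intro u hu
          have hu0 : 0 < u := lt_of_lt_of_le ht₀ hu
          have h1 := hlogK t₀ u ht₀ hu
          have hKu : K u / u ≤ A / u := (div_le_div_iff_of_pos_right hu0).2 (hKA u hu0)
          have hlg : 0 ≤ Real.log (u / t₀) := Real.log_nonneg ((one_le_div ht₀).2 hu)
          nlinarith [h1, hKu, hlg]
        set u := max t₀ (2 * t₀ * A / K t₀) with hu_def
        have hu1 : t₀ ≤ u := le_max_left _ _
        have hu2 : 2 * t₀ * A / K t₀ ≤ u := le_max_right _ _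
        have hu0 : 0 < u := lt_of_lt_of_le ht₀ hu1
        have h2 : K t₀ / t₀ ≤ A / u := hbound u hu1
        have h3 : A / u ≤ K t₀ / (2 * t₀) := by
          rw [div_le_div_iff₀ hu0 (by positivity)]
          have h4 := mul_le_mul_of_nonneg_left hu2 hKt₀'.le
          rw [mul_div_cancel₀ _ hKt₀'.ne'] at h4
          nlinarith
        have h5 : K t₀ / t₀ ≤ K t₀ / (2 * t₀) := le_trans h2 h3
        rw [div_le_div_iff₀ ht₀ (by positivity)] at h5
        nlinarith
    -- main case
    have hkey := key hK0 hmono hconc hdiff hKA hd0 hdK hlogK hθ0 hθ1 hq hA0 hM0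
    have hstar := star_ineq hθ0 hθ1 hq
    have hB0 : (0:ℝ) < A ^ (1-θ) * M ^ θ := by
      have h6 := Real.rpow_pos_of_pos hA0 (1-θ)
      have h7 := Real.rpow_pos_of_pos hM0 θ
      positivity
    have hP0 : (0:ℝ) ≤ (1 + ((1-θ)*q) ^ (1/q)) ^ (1-θ) := by
      apply Real.rpow_nonneg
      have := Real.rpow_nonneg (show (0:ℝ) ≤ (1-θ)*q by positivity) (1/q)
      linarith
    have hQ0 : (0:ℝ) ≤ ((1-θ)*q) ^ (-θ - 1/q) :=
      Real.rpow_nonneg (by positivity) _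
    constructor
    · refine le_trans hkey (ENNReal.ofReal_le_ofReal ?_)
      have h1 := mul_le_mul_of_nonneg_left hstar hB0.le
      have h2 : (0:ℝ) ≤ q * ((1 + ((1-θ)*q) ^ (1/q)) ^ (1-θ) * ((1-θ)*q) ^ (-θ - 1/q))
          * (A ^ (1-θ) * M ^ θ) :=
        mul_nonneg (mul_nonneg hq0.le (mul_nonneg hP0 hQ0)) hB0.le
      nlinarith [h1, h2]
    · intro hαone
      refine le_trans hkey (ENNReal.ofReal_le_ofReal ?_)
      rw [hαone]
      have h21 : (2:ℝ) ^ ((1:ℝ)/q) ≤ 2 := by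
        calc (2:ℝ) ^ ((1:ℝ)/q) ≤ 2 ^ (1:ℝ) :=
              Real.rpow_le_rpow_of_exponent_le one_le_two (by rw [div_le_one hq0]; exact hq)
          _ = 2 := Real.rpow_one 2
      have h2nn : (0:ℝ) ≤ (2:ℝ) ^ ((1:ℝ)/q) := Real.rpow_nonneg (by norm_num) _
      have hS : (1 + 2*q/1) * ((2:ℝ)/1) ^ (1/q) + 1 ≤ 32 * q := by
        rw [div_one, div_one]
        nlinarith [h21, h2nn, hq]
      calc (A ^ (1-θ) * M ^ θ) * ((1 + 2*q/1) * ((2:ℝ)/1) ^ (1/q) + 1)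
          ≤ (A ^ (1-θ) * M ^ θ) * (32 * q) := mul_le_mul_of_nonneg_left hS hB0.le
        _ = 32 * q * (A ^ (1-θ) * M ^ θ) := by ring
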